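/- Let A be an n×n matrix over a field and S a set of m indices. If rank(A) equals rank of the principal submatrix obtained by deleting all rows and columns of S plus 2m, then for every subset T ⊆ S, rank(A) equals rank of the principal submatrix obtained by deleting the rows and columns of T plus 2|T|. -/

import Mathlib

open Matrix Module

/-- Deleting rows (via an injective row-selection `f`) drops the rank by at most
the number of deleted rows. -/
lemma aux_row {F : Type*} [Field F] {ι κ p : Type*} [Fintype ι] [Fintype κ] [Fintype p]
    (A : Matrix ι κ F) (f : p → ι) (hf : Function.Injective f) :
    A.rank ≤ (A.submatrix f id).rank + (Fintype.card ι - Fintype.card p) := by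
  classical
  set π := LinearMap.funLeft F F f with hπdef
  have hπ : Function.Surjective π := LinearMap.funLeft_surjective_of_injective F F f hf
  have hker : finrank F (LinearMap.ker π) = Fintype.card ι - Fintype.card p := by
    have h := LinearMap.finrank_range_add_finrank_ker π
    rw [LinearMap.range_eq_top.mpr hπ, finrank_top] at h
    simp only [Module.finrank_pi] at h
    omega
  have hcomp : (A.submatrix f id).mulVecLin = π ∘ₗ A.mulVecLin := by
    have h := Matrix.mulVecLin_submatrix f (Equiv.refl κ) A
    exact h.trans rfl
  set V := LinearMap.range A.mulVecLin with hV
  have h1 := LinearMap.finrank_range_add_finrank_ker (π.domRestrict V)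
  rw [LinearMap.range_domRestrict] at h1
  have h2 : finrank F (LinearMap.ker (π.domRestrict V)) ≤ finrank F (LinearMap.ker π) := by
    rw [LinearMap.ker_domRestrict]
    calc finrank F (Submodule.comap V.subtype (LinearMap.ker π))
        = finrank F ((Submodule.comap V.subtype (LinearMap.ker π)).map V.subtype) :=
          (Submodule.finrank_map_subtype_eq _ _).symm
      _ ≤ finrank F (LinearMap.ker π) :=
          Submodule.finrank_mono (Submodule.map_comap_le _ _)
  have hrank : (A.submatrix f id).rank = finrank F (V.map π) := by
    rw [Matrix.rank, hcomp, LinearMap.range_comp]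
  have hA : A.rank = finrank F V := rfl
  rw [hA, hrank]
  omega

/-- Deleting the rows and columns selected by an injective `f` drops rank by at
most twice the number of deleted indices. -/
lemma aux_both {F : Type*} [Field F] {ι p : Type*} [Fintype ι] [Fintype p]
    (A : Matrix ι ι F) (f : p → ι) (hf : Function.Injective f) :
    A.rank ≤ (A.submatrix f f).rank + 2 * (Fintype.card ι - Fintype.card p) := by
  have h1 := aux_row A f hf
  have h2 := aux_row (A.submatrix f id)ᵀ f hf
  have he : ((A.submatrix f id)ᵀ).submatrix f id = (A.submatrix f f)ᵀ := by
    ext i j; rfl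
  rw [he, rank_transpose, rank_transpose] at h2
  omega

theorem stmt_13 {F : Type*} [Field F] {ι : Type*} [Fintype ι] [DecidableEq ι]
    (A : Matrix ι ι F) (S : Finset ι)
    (hS : A.rank =
      (A.submatrix (fun i : {i : ι // i ∉ S} => i.val) (fun i : {i : ι // i ∉ S} => i.val)).rank
        + 2 * S.card) :
    ∀ T ⊆ S, A.rank =
      (A.submatrix (fun i : {i : ι // i ∉ T} => i.val) (fun i : {i : ι // i ∉ T} => i.val)).rank
        + 2 * T.card := by
  intro T hT
  classical
  have hcardT : Fintype.card {i : ι // i ∉ T} = Fintype.card ι - T.card := by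
    simp [Fintype.card_subtype_compl]
  have hcardS : Fintype.card {i : ι // i ∉ S} = Fintype.card ι - S.card := by
    simp [Fintype.card_subtype_compl]
  have hTle : T.card ≤ S.card := Finset.card_le_card hT
  have hSle : S.card ≤ Fintype.card ι := by
    simpa using Finset.card_le_univ S
  -- inequality 1 : rank A ≤ rank A(T) + 2 |T|
  have h1 := aux_both A (fun i : {i : ι // i ∉ T} => i.val) Subtype.val_injective
  rw [hcardT] at h1
  have h1' : A.rank ≤
      (A.submatrix (fun i : {i : ι // i ∉ T} => i.val) (fun i : {i : ι // i ∉ T} => i.val)).rank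
        + 2 * T.card := by
    have : Fintype.card ι - (Fintype.card ι - T.card) = T.card := by omega
    rw [this] at h1; exact h1
  -- inequality 2 : rank A(T) ≤ rank A(S) + 2 (|S| - |T|)
  set u : {i : ι // i ∉ S} → {i : ι // i ∉ T} := fun q => ⟨q.1, fun h => q.2 (hT h)⟩ with hu
  have hui : Function.Injective u := by
    intro a b hab
    have h' : (u a).val = (u b).val := congrArg Subtype.val hab
    exact Subtype.ext h'
  have h2 := aux_both
    (A.submatrix (fun i : {i : ι // i ∉ T} => i.val) (fun i : {i : ι // i ∉ T} => i.val)) u hui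
  have hsub :
      (A.submatrix (fun i : {i : ι // i ∉ T} => i.val)
        (fun i : {i : ι // i ∉ T} => i.val)).submatrix u u
      = A.submatrix (fun i : {i : ι // i ∉ S} => i.val) (fun i : {i : ι // i ∉ S} => i.val) := by
    ext i j; rfl
  rw [hsub, hcardT, hcardS] at h2
  have hc : (Fintype.card ι - T.card) - (Fintype.card ι - S.card) = S.card - T.card := by omega
  rw [hc] at h2
  omega
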